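/- Soundness of the axiom sets Φ^X_n: for every set X of formulas, every n, and every axiom sequent σ ∈ Φ^X_n, the pullback of σ under the translation τ is derivable in !^{c,w}_{t,4}MacLL with cut. In particular: (i) !A ⇒ A is derivable; (ii) !A ⇒ !A ⊗ !A is derivable when contraction C is present; (iii) !A ⇒ 1 is derivable when weakening W is present; (iv) if !A ⇒ B is derivable then !A ⇒ !B is derivable (using !R4). -/
import Mathlib


/-- Multiplicative exponential formulas: variables, unit, !, ⊗, →, ←. -/
inductive Fm : Type where
  | var : Nat → Fm
  | one : Fm
  | bang : Fm → Fm
  | tens : Fm → Fm → Fm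
  | arr : Fm → Fm → Fm      -- A → B
  | larr : Fm → Fm → Fm     -- B ← A
deriving DecidableEq

/-- Structures: binary trees of formulas, allowing the empty structure. -/
inductive Str : Type where
  | emp : Str
  | leaf : Fm → Str
  | comma : Str → Str → Str
deriving DecidableEq

/-- One-hole structure contexts. -/
inductive Ctx : Type where
  | hole : Ctx
  | commaL : Ctx → Str → Ctx
  | commaR : Str → Ctx → Ctx

/-- Plug a structure into the hole of a context. -/
def Ctx.fill : Ctx → Str → Str
  | .hole, Δ => Δ
  | .commaL c Δ, P => .comma (c.fill P) Δ
  | .commaR Γ c, P => .comma Γ (c.fill P)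

/-- !Γ : bang every leaf formula of a structure. -/
def bangStr : Str → Str
  | .emp => .emp
  | .leaf A => .leaf (.bang A)
  | .comma a b => .comma (bangStr a) (bangStr b)

/-- `StarBang Γ Γ'` : Γ' is Γ with some subset of its leaf formulas banged (!*Γ). -/
inductive StarBang : Str → Str → Prop where
  | emp : StarBang .emp .emp
  | leaf (A : Fm) : StarBang (.leaf A) (.leaf A)
  | leafBang (A : Fm) : StarBang (.leaf A) (.leaf (.bang A))
  | comma {a a' b b' : Str} : StarBang a a' → StarBang b b' →
      StarBang (.comma a b) (.comma a' b')

/-- Proper structures: nonempty binary trees of formulas (no occurrence of the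
empty structure), matching the grammar Γ ::= (Γ,Γ) | F. -/
inductive Str.proper : Str → Prop where
  | leaf (A : Fm) : (Str.leaf A).proper
  | comma {a b : Str} : a.proper → b.proper → (Str.comma a b).proper

/-- Flags selecting the optional modal/structural rules of a system. -/
structure Flags where
  bangL : Bool := false
  bangR : Bool := false
  bangRK : Bool := false
  bangR4 : Bool := false
  bangRK4 : Bool := false
  contr : Bool := false     -- single-formula contraction C
  contrK : Bool := false    -- structural contraction CK
  weak : Bool := false      -- weakening W
  cut : Bool := false

/-- Sequent derivability in MacLL extended by the rules selected by `fl`,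
with nonlogical axioms `Ax`. -/
inductive Der (fl : Flags) (Ax : Set (Str × Fm)) : Str → Fm → Prop where
  | ax {Γ : Str} {C : Fm} : (Γ, C) ∈ Ax → Der fl Ax Γ C
  | init (A : Fm) : Der fl Ax (.leaf A) A
  | tensL (Γ : Ctx) {A B C : Fm} :
      Der fl Ax (Γ.fill (.comma (.leaf A) (.leaf B))) C →
      Der fl Ax (Γ.fill (.leaf (.tens A B))) C
  | tensR {Γ Δ : Str} {A B : Fm} :
      Der fl Ax Γ A → Der fl Ax Δ B → Der fl Ax (.comma Γ Δ) (.tens A B)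
  | arrL (Γ : Ctx) {Δ : Str} {A B C : Fm} :
      Der fl Ax Δ A → Der fl Ax (Γ.fill (.leaf B)) C →
      Der fl Ax (Γ.fill (.comma Δ (.leaf (.arr A B)))) C
  | arrR {Γ : Str} {A B : Fm} :
      Der fl Ax (.comma (.leaf A) Γ) B → Der fl Ax Γ (.arr A B)
  | larrL (Γ : Ctx) {Δ : Str} {A B C : Fm} :
      Der fl Ax Δ A → Der fl Ax (Γ.fill (.leaf B)) C →
      Der fl Ax (Γ.fill (.comma (.leaf (.larr B A)) Δ)) C
  | larrR {Γ : Str} {A B : Fm} :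
      Der fl Ax (.comma Γ (.leaf A)) B → Der fl Ax Γ (.larr B A)
  | oneL (Γ : Ctx) {C : Fm} :
      Der fl Ax (Γ.fill .emp) C → Der fl Ax (Γ.fill (.leaf .one)) C
  | oneR : Der fl Ax .emp .one
  | bangL (Γ : Ctx) {A C : Fm} : fl.bangL = true →
      Der fl Ax (Γ.fill (.leaf A)) C → Der fl Ax (Γ.fill (.leaf (.bang A))) C
  | bangR {A C : Fm} : fl.bangR = true →
      Der fl Ax (.leaf A) C → Der fl Ax (.leaf (.bang A)) (.bang C)
  | bangRK {Γ : Str} {C : Fm} : fl.bangRK = true →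
      Der fl Ax Γ C → Der fl Ax (bangStr Γ) (.bang C)
  | bangR4 {A C : Fm} : fl.bangR4 = true →
      Der fl Ax (.leaf (.bang A)) C → Der fl Ax (.leaf (.bang A)) (.bang C)
  | bangRK4 {Γ Γ' : Str} {C : Fm} : fl.bangRK4 = true →
      StarBang Γ Γ' → Der fl Ax Γ' C → Der fl Ax (bangStr Γ) (.bang C)
  | contr (Γ : Ctx) {A : Fm} {C : Fm} : fl.contr = true →
      Der fl Ax (Γ.fill (.comma (.leaf (.bang A)) (.leaf (.bang A)))) C →
      Der fl Ax (Γ.fill (.leaf (.bang A))) C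
  | contrK (Γ : Ctx) {Δ : Str} {C : Fm} : fl.contrK = true → Δ.proper →
      Der fl Ax (Γ.fill (.comma (bangStr Δ) (bangStr Δ))) C →
      Der fl Ax (Γ.fill (bangStr Δ)) C
  | weak (Γ : Ctx) {A C : Fm} : fl.weak = true →
      Der fl Ax (Γ.fill .emp) C → Der fl Ax (Γ.fill (.leaf (.bang A))) C
  | cut (Γ : Ctx) {Δ : Str} {A C : Fm} : fl.cut = true →
      Der fl Ax Δ A → Der fl Ax (Γ.fill (.leaf A)) C →
      Der fl Ax (Γ.fill Δ) C

/-- Plain MacLL (no modal or structural rules, no cut). -/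
def macll : Flags := {}
/-- Translation τ into !-free formulas: τ(p_i)=p_{2i+1}, τ(!A)=p_{2⌈A⌉}. -/
def tau (enc : Fm → Nat) : Fm → Fm
  | .var i => .var (2 * i + 1)
  | .one => .one
  | .bang A => .var (2 * enc A)
  | .tens A B => .tens (tau enc A) (tau enc B)
  | .arr A B => .arr (tau enc A) (tau enc B)
  | .larr A B => .larr (tau enc A) (tau enc B)

/-- Leafwise extension of τ to structures. -/
def tauStr (enc : Fm → Nat) : Str → Str
  | .emp => .emp
  | .leaf A => .leaf (tau enc A)
  | .comma a b => .comma (tauStr enc a) (tauStr enc b)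

/-- The set of propositional variables of a formula. -/
def Fm.vars : Fm → Set Nat
  | .var i => {i}
  | .one => ∅
  | .bang A => A.vars
  | .tens A B => A.vars ∪ B.vars
  | .arr A B => A.vars ∪ B.vars
  | .larr A B => A.vars ∪ B.vars

def Str.vars : Str → Set Nat
  | .emp => ∅
  | .leaf A => A.vars
  | .comma a b => a.vars ∪ b.vars

/-- Subformulas of a formula. -/
def Fm.sub : Fm → Set Fm
  | .var i => {.var i}
  | .one => {.one}
  | .bang A => insert (.bang A) A.sub
  | .tens A B => insert (.tens A B) (A.sub ∪ B.sub)
  | .arr A B => insert (.arr A B) (A.sub ∪ B.sub)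
  | .larr A B => insert (.larr A B) (A.sub ∪ B.sub)

/-- The yield of a structure: the set of formulas occurring in it. -/
def Str.fms : Str → Set Fm
  | .emp => ∅
  | .leaf A => {A}
  | .comma a b => a.fms ∪ b.fms

/-- !-free formulas. -/
def Fm.bangFree : Fm → Prop
  | .var _ => True
  | .one => True
  | .bang _ => False
  | .tens A B => A.bangFree ∧ B.bangFree
  | .arr A B => A.bangFree ∧ B.bangFree
  | .larr A B => A.bangFree ∧ B.bangFree

def Str.bangFree : Str → Prop
  | .emp => True
  | .leaf A => A.bangFree
  | .comma a b => a.bangFree ∧ b.bangFree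

/-- The flags of the cut-free system !^S_M MacLL, for S ⊆ {c,w} and M ⊆ {k,t,4}
given by Booleans c, w, k, t, f4. -/
def sysFlags (c w k t f4 : Bool) : Flags where
  bangL := t
  bangR := !k && !f4
  bangRK := k && !f4
  bangR4 := !k && f4
  bangRK4 := k && f4
  contr := c && !k
  contrK := c && k
  weak := w
  cut := false

/-- MacLL with cut (used with nonlogical axioms). -/
def macllCut : Flags := { cut := true }

/-- The axiom sets Φ^X_n for the light system with t, 4, c, w: Φ^X_{n+1} adds
p_{2⌈A⌉} ⇒ p_{2⌈B⌉} whenever MacLL+Φ^X_n proves p_{2⌈A⌉} ⇒ τ(B). -/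
def Phi (enc : Fm → Nat) (X : Set Fm) : Nat → Set (Str × Fm)
  | 0 => {s | ∃ A, Fm.bang A ∈ X ∧
      (s = (Str.leaf (Fm.var (2 * enc A)), tau enc A) ∨
       s = (Str.leaf (Fm.var (2 * enc A)),
            Fm.tens (Fm.var (2 * enc A)) (Fm.var (2 * enc A))) ∨
       s = (Str.leaf (Fm.var (2 * enc A)), Fm.one))}
  | n + 1 => Phi enc X n ∪ {s | ∃ A B, Fm.bang A ∈ X ∧ Fm.bang B ∈ X ∧
      s = (Str.leaf (Fm.var (2 * enc A)), Fm.var (2 * enc B)) ∧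
      Der macllCut (Phi enc X n) (Str.leaf (Fm.var (2 * enc A))) (tau enc B)}

/-- !^{c,w}_{t,4}MacLL with cut. -/
def sys8 : Flags :=
  { bangL := true, bangR4 := true, contr := true, weak := true, cut := true }

open Classical in
noncomputable def sMap (enc : Fm → Nat) : Nat → Fm := fun n =>
  if n % 2 = 1 then .var (n / 2)
  else if h : ∃ A, 2 * enc A = n then .bang (Classical.choose h) else .var 0

def subst (s : Nat → Fm) : Fm → Fm
  | .var i => s i
  | .one => .one
  | .bang A => .bang (subst s A)
  | .tens A B => .tens (subst s A) (subst s B)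
  | .arr A B => .arr (subst s A) (subst s B)
  | .larr A B => .larr (subst s A) (subst s B)

def substStr (s : Nat → Fm) : Str → Str
  | .emp => .emp
  | .leaf A => .leaf (subst s A)
  | .comma a b => .comma (substStr s a) (substStr s b)

def substCtx (s : Nat → Fm) : Ctx → Ctx
  | .hole => .hole
  | .commaL c Δ => .commaL (substCtx s c) (substStr s Δ)
  | .commaR Γ c => .commaR (substStr s Γ) (substCtx s c)

lemma substStr_fill (s : Nat → Fm) (c : Ctx) (Δ : Str) :
    substStr s (c.fill Δ) = (substCtx s c).fill (substStr s Δ) := by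
  induction c generalizing Δ <;> simp [Ctx.fill, substStr, substCtx, *]

lemma sMap_even (enc : Fm → Nat) (henc : Function.Injective enc) (A : Fm) :
    sMap enc (2 * enc A) = .bang A := by
  have h1 : (2 * enc A) % 2 = 0 := by omega
  have h2 : ∃ B, 2 * enc B = 2 * enc A := ⟨A, rfl⟩
  simp only [sMap, h1]
  rw [if_neg (by omega), dif_pos h2]
  have := Classical.choose_spec h2
  have : enc (Classical.choose h2) = enc A := by omega
  rw [henc this]

lemma subst_tau (enc : Fm → Nat) (henc : Function.Injective enc) (F : Fm) :
    subst (sMap enc) (tau enc F) = F := by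
  induction F with
  | var i =>
      simp only [tau, subst, sMap]
      rw [if_pos (by omega : (2 * i + 1) % 2 = 1)]
      congr 1
      omega
  | one => rfl
  | bang A => simpa [tau, subst] using sMap_even enc henc A
  | tens A B ihA ihB => simp [tau, subst, ihA, ihB]
  | arr A B ihA ihB => simp [tau, subst, ihA, ihB]
  | larr A B ihA ihB => simp [tau, subst, ihA, ihB]

lemma substStr_tauStr (enc : Fm → Nat) (henc : Function.Injective enc) (Γ : Str) :
    substStr (sMap enc) (tauStr enc Γ) = Γ := by
  induction Γ with
  | emp => rfl
  | leaf A => simp [tauStr, substStr, subst_tau enc henc]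
  | comma a b iha ihb => simp [tauStr, substStr, iha, ihb]

lemma der_subst {Ax : Set (Str × Fm)} {s : Nat → Fm}
    (hAx : ∀ Γ C, (Γ, C) ∈ Ax → Der sys8 ∅ (substStr s Γ) (subst s C)) :
    ∀ {Γ : Str} {C : Fm}, Der macllCut Ax Γ C →
      Der sys8 ∅ (substStr s Γ) (subst s C) := by
  intro Γ C h
  induction h with
  | ax h => exact hAx _ _ h
  | init A => exact .init _
  | tensL c _ ih =>
      rw [substStr_fill] at ih ⊢
      simp only [substStr, subst] at ih ⊢
      exact .tensL _ ih
  | tensR _ _ ih1 ih2 => exact .tensR ih1 ih2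
  | arrL c _ _ ih1 ih2 =>
      rw [substStr_fill] at ih2 ⊢
      simp only [substStr, subst] at ih2 ⊢
      exact .arrL _ ih1 ih2
  | arrR _ ih => exact .arrR ih
  | larrL c _ _ ih1 ih2 =>
      rw [substStr_fill] at ih2 ⊢
      simp only [substStr, subst] at ih2 ⊢
      exact .larrL _ ih1 ih2
  | larrR _ ih => exact .larrR ih
  | oneL c _ ih =>
      rw [substStr_fill] at ih ⊢
      simp only [substStr, subst] at ih ⊢
      exact .oneL _ ih
  | oneR => exact .oneR
  | bangL _ hfl _ _ => exact absurd hfl (by simp [macllCut])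
  | bangR hfl _ _ => exact absurd hfl (by simp [macllCut])
  | bangRK hfl _ _ => exact absurd hfl (by simp [macllCut])
  | bangR4 hfl _ _ => exact absurd hfl (by simp [macllCut])
  | bangRK4 hfl _ _ _ => exact absurd hfl (by simp [macllCut])
  | contr _ hfl _ _ => exact absurd hfl (by simp [macllCut])
  | contrK _ hfl _ _ _ => exact absurd hfl (by simp [macllCut])
  | weak _ hfl _ _ => exact absurd hfl (by simp [macllCut])
  | cut c _ _ _ ih1 ih2 =>
      rw [substStr_fill] at ih2 ⊢
      simp only [substStr, subst] at ih2 ⊢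
      exact .cut _ rfl ih1 ih2

lemma bang_t (A : Fm) : Der sys8 ∅ (.leaf (.bang A)) A :=
  .bangL .hole rfl (.init A)

lemma bang_c (A : Fm) :
    Der sys8 ∅ (.leaf (.bang A)) (.tens (.bang A) (.bang A)) :=
  .contr .hole rfl (.tensR (.init _) (.init _))

lemma bang_w (A : Fm) : Der sys8 ∅ (.leaf (.bang A)) .one :=
  .weak .hole rfl .oneR

lemma phi_sound (enc : Fm → Nat) (henc : Function.Injective enc) (X : Set Fm) :
    ∀ n : Nat, ∀ Γ₀ C₀, (Γ₀, C₀) ∈ Phi enc X n →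
      Der sys8 ∅ (substStr (sMap enc) Γ₀) (subst (sMap enc) C₀) := by
  intro n
  induction n with
  | zero =>
      rintro Γ₀ C₀ ⟨A, _, h | h | h⟩ <;>
        obtain ⟨rfl, rfl⟩ := Prod.mk.injEq .. ▸ h
      · simpa [substStr, subst, sMap_even enc henc, subst_tau enc henc]
          using bang_t A
      · simpa [substStr, subst, sMap_even enc henc] using bang_c A
      · simpa [substStr, subst, sMap_even enc henc] using bang_w A
  | succ n ih =>
      rintro Γ₀ C₀ (h | ⟨A, B, _, _, heq, hder⟩)
      · exact ih _ _ h
      · obtain ⟨rfl, rfl⟩ := Prod.mk.injEq .. ▸ heq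
        have hB := der_subst (fun Γ C h => ih Γ C h) hder
        rw [subst_tau enc henc] at hB
        simp only [substStr, subst, sMap_even enc henc] at hB ⊢
        exact .bangR4 rfl hB

/-- Soundness of the axioms Φ^X_n: every axiom pulls back under τ to a sequent
derivable in !^{c,w}_{t,4}MacLL with cut; in particular !A ⇒ A, !A ⇒ !A ⊗ !A,
!A ⇒ 1 are derivable, and !A ⇒ B derivable implies !A ⇒ !B derivable. -/

theorem stmt8 (enc : Fm → Nat) (henc : Function.Injective enc) :
    (∀ (X : Set Fm) (n : Nat) (Γ₀ : Str) (C₀ : Fm),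
        (Γ₀, C₀) ∈ Phi enc X n →
        ∀ (Γ : Str) (C : Fm), tauStr enc Γ = Γ₀ → tau enc C = C₀ →
          Der sys8 ∅ Γ C) ∧
    (∀ A : Fm, Der sys8 ∅ (.leaf (.bang A)) A) ∧
    (∀ A : Fm, Der sys8 ∅ (.leaf (.bang A)) (.tens (.bang A) (.bang A))) ∧
    (∀ A : Fm, Der sys8 ∅ (.leaf (.bang A)) .one) ∧
    (∀ A B : Fm, Der sys8 ∅ (.leaf (.bang A)) B →
        Der sys8 ∅ (.leaf (.bang A)) (.bang B)) := by
  refine ⟨?_, bang_t, bang_c, bang_w, fun A B h => .bangR4 rfl h⟩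
  intro X n Γ₀ C₀ hmem Γ C hΓ hC
  have := phi_sound enc henc X n Γ₀ C₀ hmem
  rwa [← hΓ, ← hC, substStr_tauStr enc henc, subst_tau enc henc] at this
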